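/- For every n ≥ 2, let Ω_n ⊂ ℝ² be the disjoint union of the disk centered at (2,0) with radius R_n = 1 − 1/n and the disk centered at (−2(n−1)²/(2n−1), 0) with radius r_n = √((2n−1))/n. Then |Ω_n| = π, the barycenter of Ω_n is the origin, and the (De Giorgi) isoperimetric deficit δ(Ω_n) = (P(Ω_n) − 2π)/(2π) = R_n + r_n − 1 tends to 0 as n → ∞, while the barycentric asymmetry λ₀(Ω_n) = |Ω_n Δ B|/π (B the unit disk centered at the origin) satisfies λ₀(Ω_n) = 2 for all large n. Hence δ(Ω_n)/λ₀(Ω_n)² → 0. -/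

import Mathlib

open MeasureTheory Metric Real Set
open scoped ENNReal NNReal


open MeasureTheory Metric

/-- A point of the Euclidean plane. -/
noncomputable def pt (a b : ℝ) : EuclideanSpace ℝ (Fin 2) := WithLp.toLp 2 ![a, b]

noncomputable def Rn (n : ℕ) : ℝ := 1 - 1 / (n : ℝ)

noncomputable def rn (n : ℕ) : ℝ := Real.sqrt (2 * (n : ℝ) - 1) / (n : ℝ)

/-- Fuglede's counterexample: the union of two disjoint disks. -/
noncomputable def Ωn (n : ℕ) : Set (EuclideanSpace ℝ (Fin 2)) :=
  closedBall (pt 2 0) (Rn n) ∪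
  closedBall (pt (-(2 * ((n : ℝ) - 1) ^ 2 / (2 * (n : ℝ) - 1))) 0) (rn n)

namespace Fgl


/-! ### Hausdorff measure of circles -/

lemma conn_lower {S : Set ℂ} (hS : IsPreconnected S) {a b : ℂ} (ha : a ∈ S) (hb : b ∈ S) :
    ENNReal.ofReal (dist a b) ≤ μH[1] S := by
  rcases eq_or_ne a b with rfl | hab
  · simp
  · set r : ℝ := dist a b with hr
    have hr0 : 0 < r := dist_pos.2 hab
    set u : ℂ := (b - a) / r with hu
    have hu1 : ‖u‖ = 1 := by
      rw [hu, norm_div, Complex.norm_real, Real.norm_eq_abs, abs_of_pos hr0]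
      rw [hr, Complex.dist_eq]
      rw [div_eq_one_iff_eq (by rw [hr] at hr0; rw [← Complex.dist_eq]; exact (dist_pos.2 hab).ne' )]
      exact (norm_sub_rev b a)
    set f : ℂ → ℝ := fun z => ((starRingEnd ℂ u) * z).re with hf
    have hlip : LipschitzWith 1 f := by
      apply LipschitzWith.of_dist_le_mul
      intro x y
      have : f x - f y = ((starRingEnd ℂ u) * (x - y)).re := by
        simp [hf, mul_sub]
      rw [Real.dist_eq, this, NNReal.coe_one, one_mul]
      calc |((starRingEnd ℂ u) * (x - y)).re| ≤ ‖(starRingEnd ℂ u) * (x - y)‖ :=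
            Complex.abs_re_le_norm _
        _ = ‖x - y‖ := by rw [norm_mul]; simp [hu1]
        _ = dist x y := (Complex.dist_eq x y).symm
    have hfb : f b = f a + r := by
      have hba : b - a = (r : ℂ) * u := by
        rw [hu, mul_div_cancel₀]
        exact_mod_cast hr0.ne'
      have h1 : f b - f a = ((starRingEnd ℂ u) * (b - a)).re := by simp [hf, mul_sub]
      have h2 : ((starRingEnd ℂ u) * (b - a)).re = r := by
        rw [hba, mul_comm ((r:ℂ)) u, ← mul_assoc, mul_comm _ u, Complex.mul_conj]
        simp [Complex.normSq_eq_norm_sq, hu1]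
      linarith [h1, h2]
    have hicc : Icc (f a) (f b) ⊆ f '' S :=
      (hS.image f hlip.continuous.continuousOn).Icc_subset ⟨a, ha, rfl⟩ ⟨b, hb, rfl⟩
    calc ENNReal.ofReal r = μH[1] (Icc (f a) (f b)) := by
          rw [MeasureTheory.hausdorffMeasure_real, Real.volume_Icc, hfb]; ring_nf
      _ ≤ μH[1] (f '' S) := measure_mono hicc
      _ ≤ μH[1] S := by
          have := hlip.hausdorffMeasure_image_le (d := 1) zero_le_one S
          simpa using this

lemma chord {θ : ℝ} (h0 : 0 ≤ θ) (h2 : θ ≤ 2*π) :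
    ‖Complex.exp (θ * Complex.I) - 1‖ = 2 * Real.sin (θ/2) := by
  have habs : ‖Complex.exp (θ * Complex.I) - 1‖
      = Real.sqrt (2 - 2*Real.cos θ) := by
    rw [Complex.norm_def]
    congr 1
    rw [Complex.exp_mul_I]
    simp [Complex.normSq_apply, ← Complex.ofReal_cos, ← Complex.ofReal_sin]
    nlinarith [Real.sin_sq_add_cos_sq θ]
  rw [habs, Real.sin_half_eq_sqrt h0 h2,
    show (2 - 2*Real.cos θ) = 4 * ((1 - Real.cos θ)/2) by ring,
    Real.sqrt_mul (by norm_num : (0:ℝ) ≤ 4),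
    show Real.sqrt 4 = 2 by rw [show (4:ℝ) = 2^2 by norm_num, Real.sqrt_sq (by norm_num)]]

lemma dist_circleMap' {c : ℂ} {ρ : ℝ} (hρ : 0 ≤ ρ) {a b : ℝ} (hab : a ≤ b) (h2 : b - a ≤ 2*π) :
    dist (circleMap c ρ a) (circleMap c ρ b) = ρ * (2 * Real.sin ((b-a)/2)) := by
  rw [dist_comm, Complex.dist_eq]
  have : circleMap c ρ b - circleMap c ρ a
      = (ρ : ℂ) * Complex.exp (a * Complex.I) * (Complex.exp (((b - a : ℝ) : ℂ) * Complex.I) - 1) := by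
    simp only [circleMap]
    rw [mul_sub, mul_one, Complex.ofReal_sub]
    rw [show ((b:ℂ) - a) * Complex.I = b * Complex.I + (-(a * Complex.I)) by ring,
      Complex.exp_add, Complex.exp_neg]
    field_simp
    ring
  rw [this, norm_mul, norm_mul, Complex.norm_real, Real.norm_eq_abs, abs_of_nonneg hρ,
    Complex.norm_exp_ofReal_mul_I, chord (by linarith) h2]
  ring

lemma circleMap_inj {c : ℂ} {ρ : ℝ} (hρ : ρ ≠ 0) {x y : ℝ} (h : |x - y| < 2*π)
    (he : circleMap c ρ x = circleMap c ρ y) : x = y := by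
  have : Complex.exp (x * Complex.I) = Complex.exp (y * Complex.I) := by
    simp only [circleMap] at he
    exact mul_left_cancel₀ (Complex.ofReal_ne_zero.2 hρ) (add_left_cancel he)
  rw [Complex.exp_eq_exp_iff_exists_int] at this
  obtain ⟨n, hn⟩ := this
  have hn' : (x : ℂ) - y = (n : ℂ) * (2 * π) := by
    have hI : ((x : ℂ) - y) * Complex.I = (n * (2 * π)) * Complex.I := by
      rw [sub_mul, hn]; ring
    exact mul_right_cancel₀ Complex.I_ne_zero hI
  have hreal : x - y = n * (2 * π) := by exact_mod_cast hn'
  have : n = 0 := by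
    by_contra hne
    have : (1:ℝ) ≤ |(n:ℝ)| := by exact_mod_cast Int.one_le_abs (by exact_mod_cast hne)
    rw [hreal, abs_mul, abs_of_pos (by positivity : (0:ℝ) < 2*π)] at h
    nlinarith [Real.pi_pos]
  rw [this] at hreal; push_cast at hreal; linarith

lemma nsin_tendsto : Filter.Tendsto (fun n : ℕ => (n:ℝ) * Real.sin (π / n)) Filter.atTop (nhds π) := by
  have hslope : Filter.Tendsto (fun x : ℝ => Real.sin x / x) (nhdsWithin 0 {(0:ℝ)}ᶜ) (nhds 1) := by
    have h := Real.hasDerivAt_sin 0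
    rw [hasDerivAt_iff_tendsto_slope] at h
    simp only [Real.cos_zero] at h
    refine h.congr (fun x => ?_)
    simp [slope_def_field, Real.sin_zero]
  have hpi : Filter.Tendsto (fun n : ℕ => π / (n:ℝ)) Filter.atTop (nhdsWithin 0 {(0:ℝ)}ᶜ) := by
    apply tendsto_nhdsWithin_of_tendsto_nhds_of_eventually_within
    · exact tendsto_const_div_atTop_nhds_zero_nat π
    · filter_upwards [Filter.eventually_ge_atTop 1] with n hn
      have : (0:ℝ) < n := by exact_mod_cast hn
      simp [div_ne_zero Real.pi_ne_zero this.ne']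
  have h1 : Filter.Tendsto (fun n : ℕ => Real.sin (π/n) / (π/n)) Filter.atTop (nhds 1) :=
    hslope.comp hpi
  have h2 : Filter.Tendsto (fun n : ℕ => π * (Real.sin (π/n) / (π/n))) Filter.atTop (nhds (π * 1)) :=
    h1.const_mul π
  rw [mul_one] at h2
  refine h2.congr' ?_
  filter_upwards [Filter.eventually_ge_atTop 1] with n hn
  have hn0 : (0:ℝ) < n := by exact_mod_cast hn
  rw [div_div_eq_mul_div, mul_comm]
  field_simp

lemma hausdorff_circle (c : ℂ) {ρ : ℝ} (hρ : 0 < ρ) :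
    μH[1] (sphere c ρ) = ENNReal.ofReal (2*π*ρ) := by
  haveI : NoAtoms (μH[1] : Measure ℂ) := MeasureTheory.Measure.noAtoms_hausdorff ℂ one_pos
  have hsphere : sphere c ρ = circleMap c ρ '' Ioc 0 (2*π) := by
    rw [image_circleMap_Ioc, abs_of_pos hρ]
  apply le_antisymm
  · calc μH[1] (sphere c ρ) ≤ μH[1] (circleMap c ρ '' Icc 0 (2*π)) := by
          rw [hsphere]; exact measure_mono (image_mono Ioc_subset_Icc_self)
      _ ≤ (Real.nnabs ρ : ℝ≥0∞) ^ (1:ℝ) * μH[1] (Icc (0:ℝ) (2*π)) :=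
          (lipschitzWith_circleMap c ρ).hausdorffMeasure_image_le zero_le_one _
      _ = ENNReal.ofReal (2*π*ρ) := by
          rw [MeasureTheory.hausdorffMeasure_real, Real.volume_Icc, ENNReal.rpow_one,
            show ((Real.nnabs ρ : ℝ≥0∞)) = ENNReal.ofReal ρ by
              rw [ENNReal.ofReal, Real.nnabs_of_nonneg hρ.le],
            ← ENNReal.ofReal_mul hρ.le]
          congr 1; ring
  · have key : ∀ n : ℕ, 2 ≤ n →
        ENNReal.ofReal ((n:ℝ) * (ρ * (2 * Real.sin (π / n)))) ≤ μH[1] (sphere c ρ) := by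
      intro n hn
      have hn0 : (0:ℝ) < n := by positivity
      set a : ℕ → ℝ := fun k => 2*π*k/n with ha
      have hstep : ∀ k : ℕ, a (k+1) - a k = 2*π/n := by
        intro k; simp only [ha]; push_cast; field_simp; ring
      have hgap : 2*π/n < 2*π := by
        rw [div_lt_iff₀ hn0]
        nlinarith [Real.pi_pos, show (2:ℝ) ≤ n by exact_mod_cast hn]
      have hgap0 : 0 < 2*π/n := by positivity
      have hmono : ∀ j k : ℕ, j ≤ k → a j ≤ a k := by
        intro j k hjk
        have : (j:ℝ) ≤ (k:ℝ) := by exact_mod_cast hjk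
        simp only [ha]
        gcongr
      set A : ℕ → Set ℂ := fun k => circleMap c ρ '' Ioc (a k) (a (k+1)) with hA
      set B : ℕ → Set ℂ := fun k => circleMap c ρ '' Icc (a k) (a (k+1)) with hB
      have hinjIcc : ∀ k, InjOn (circleMap c ρ) (Icc (a k) (a (k+1))) := by
        intro k x hx y hy hxy
        apply circleMap_inj hρ.ne' ?_ hxy
        rw [abs_sub_lt_iff]
        constructor <;> nlinarith [hx.1, hx.2, hy.1, hy.2, hstep k]
      have hAB : ∀ k, A k = B k \ {circleMap c ρ (a k)} := by
        intro k
        ext z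
        constructor
        · rintro ⟨x, hx, rfl⟩
          refine ⟨⟨x, Ioc_subset_Icc_self hx, rfl⟩, ?_⟩
          simp only [mem_singleton_iff]
          intro hz
          have := hinjIcc k (Ioc_subset_Icc_self hx) (left_mem_Icc.2 (by linarith [hstep k])) hz
          exact absurd this (ne_of_gt hx.1)
        · rintro ⟨⟨x, hx, rfl⟩, hz⟩
          refine ⟨x, ⟨lt_of_le_of_ne hx.1 ?_, hx.2⟩, rfl⟩
          intro h; exact hz (by rw [← h]; exact rfl)
      have hBcompact : ∀ k, IsCompact (B k) :=
        fun k => (isCompact_Icc).image (continuous_circleMap c ρ)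
      have hAmeas : ∀ k, MeasurableSet (A k) := by
        intro k; rw [hAB k]
        exact ((hBcompact k).isClosed.measurableSet).diff (measurableSet_singleton _)
      have hAsub : ∀ k, A k ⊆ sphere c ρ := by
        intro k
        rintro z ⟨x, _, rfl⟩
        exact circleMap_mem_sphere c hρ.le x
      have hAdisj : ∀ j k : ℕ, j < n → k < n → j ≠ k → Disjoint (A j) (A k) := by
        intro j k hjn hkn hjk
        apply Set.disjoint_left.2
        rintro z ⟨x, hx, rfl⟩ ⟨y, hy, hyz⟩
        have hxI : x ∈ Ioc (0:ℝ) (2*π) := by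
          constructor
          · calc (0:ℝ) = a 0 := by simp [ha]
              _ ≤ a j := hmono 0 j (Nat.zero_le _)
              _ < x := hx.1
          · calc x ≤ a (j+1) := hx.2
              _ ≤ a n := hmono _ _ hjn
              _ = 2*π := by simp only [ha]; field_simp
        have hyI : y ∈ Ioc (0:ℝ) (2*π) := by
          constructor
          · calc (0:ℝ) = a 0 := by simp [ha]
              _ ≤ a k := hmono 0 k (Nat.zero_le _)
              _ < y := hy.1
          · calc y ≤ a (k+1) := hy.2
              _ ≤ a n := hmono _ _ hkn
              _ = 2*π := by simp only [ha]; field_simp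
        have hxy : x = y := by
          apply circleMap_inj hρ.ne' ?_ hyz.symm
          rw [abs_sub_lt_iff]
          constructor <;> nlinarith [hxI.1, hxI.2, hyI.1, hyI.2, Real.pi_pos]
        rcases Nat.lt_or_ge j k with h | h
        · have : a (j+1) ≤ a k := hmono _ _ h
          linarith [hx.2, hy.1, hxy]
        · have hkj : k < j := lt_of_le_of_ne h (Ne.symm hjk)
          have : a (k+1) ≤ a j := hmono _ _ hkj
          linarith [hx.1, hy.2, hxy]
      have hconn : ∀ k : ℕ, ENNReal.ofReal (ρ * (2 * Real.sin (π / n))) ≤ μH[1] (A k) := by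
        intro k
        have hmA : μH[1] (A k) = μH[1] (B k) := by
          rw [hAB k, measure_diff_null (by haveI : NullSingletonClass (μH[1] : Measure ℂ) := this; exact measure_singleton _)]
        rw [hmA]
        have hBconn : IsPreconnected (B k) :=
          (isPreconnected_Icc).image _ (continuous_circleMap c ρ).continuousOn
        have hle : a k ≤ a (k+1) := hmono k (k+1) (Nat.le_succ k)
        have h1 : circleMap c ρ (a k) ∈ B k := ⟨a k, left_mem_Icc.2 hle, rfl⟩
        have h2 : circleMap c ρ (a (k+1)) ∈ B k := ⟨a (k+1), right_mem_Icc.2 hle, rfl⟩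
        have hd := conn_lower hBconn h1 h2
        rwa [dist_circleMap' hρ.le hle (by rw [hstep k]; exact hgap.le), hstep k,
          show (2*π/(n:ℝ))/2 = π/n by ring] at hd
      calc ENNReal.ofReal ((n:ℝ) * (ρ * (2 * Real.sin (π / n))))
          = ∑ _k ∈ Finset.range n, ENNReal.ofReal (ρ * (2 * Real.sin (π / n))) := by
            rw [Finset.sum_const, Finset.card_range, nsmul_eq_mul,
              ENNReal.ofReal_mul (by positivity : (0:ℝ) ≤ (n:ℝ)), ENNReal.ofReal_natCast]
        _ ≤ ∑ k ∈ Finset.range n, μH[1] (A k) := Finset.sum_le_sum fun k _ => hconn k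
        _ = μH[1] (⋃ k ∈ Finset.range n, A k) := by
            refine (measure_biUnion_finset ?_ (fun k _ => hAmeas k)).symm
            intro j hj k hk hjk
            exact hAdisj j k (Finset.mem_coe.1 hj |> Finset.mem_range.1)
              (Finset.mem_coe.1 hk |> Finset.mem_range.1) hjk
        _ ≤ μH[1] (sphere c ρ) := measure_mono (iUnion₂_subset fun k _ => hAsub k)
    have htend : Filter.Tendsto (fun n : ℕ => ENNReal.ofReal ((n:ℝ) * (ρ * (2 * Real.sin (π / n)))))
        Filter.atTop (nhds (ENNReal.ofReal (2*π*ρ))) := by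
      have hreal : Filter.Tendsto (fun n : ℕ => (n:ℝ) * (ρ * (2 * Real.sin (π / n))))
          Filter.atTop (nhds (2*π*ρ)) := by
        have := nsin_tendsto.const_mul (2*ρ)
        rw [show (2*ρ)*π = 2*π*ρ by ring] at this
        refine this.congr (fun n => by ring)
      exact (ENNReal.continuous_ofReal.continuousAt).tendsto.comp hreal
    exact le_of_tendsto htend (Filter.eventually_atTop.2 ⟨2, key⟩)

lemma hausdorff_sphere_E2 (x : EuclideanSpace ℝ (Fin 2)) {ρ : ℝ} (hρ : 0 < ρ) :
    μH[1] (sphere x ρ) = ENNReal.ofReal (2*π*ρ) := by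
  set e := Complex.orthonormalBasisOneI.repr.toIsometryEquiv with he
  have h1 : sphere x ρ = e '' (sphere (e.symm x) ρ) := by
    rw [IsometryEquiv.image_sphere]; simp
  rw [h1, e.hausdorffMeasure_image, hausdorff_circle _ hρ]

/-! ### plane geometry helpers -/

lemma vol_ball_E2 (x : EuclideanSpace ℝ (Fin 2)) (r : ℝ) (hr : 0 ≤ r) :
    volume (closedBall x r) = ENNReal.ofReal (π * r^2) := by
  rw [EuclideanSpace.volume_closedBall]
  simp only [Fintype.card_fin]
  rw [show ((2:ℕ):ℝ)/2 + 1 = 2 by norm_num]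
  rw [Real.Gamma_two]
  rw [← ENNReal.ofReal_pow hr, ← ENNReal.ofReal_mul (by positivity)]
  congr 1
  rw [div_one, Real.sq_sqrt Real.pi_pos.le]
  ring

lemma frontier_union_sep {X : Type*} [TopologicalSpace X] {A B U V : Set X}
    (hAc : IsClosed A) (hBc : IsClosed B)
    (hA : A ⊆ U) (hB : B ⊆ V) (hU : IsOpen U) (hV : IsOpen V) (hUV : Disjoint U V) :
    frontier (A ∪ B) = frontier A ∪ frontier B := by
  apply Subset.antisymm (frontier_union_subset A B |>.trans (by
    apply union_subset
    · exact (inter_subset_left).trans subset_union_left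
    · exact (inter_subset_right).trans subset_union_right))
  have key : ∀ (A' B' U' V' : Set X), IsClosed A' → A' ⊆ U' → B' ⊆ V' → IsOpen U' → IsOpen V' →
      Disjoint U' V' → frontier A' ⊆ frontier (A' ∪ B') := by
    intro A' B' U' V' hA'c hA' hB' hU' hV' hUV'
    intro x hx
    have hxA : x ∈ A' := hA'c.frontier_subset hx
    constructor
    · exact closure_mono subset_union_left hx.1
    · intro hint
      apply hx.2
      have hW : IsOpen (interior (A' ∪ B') ∩ U') := isOpen_interior.inter hU'
      have hxW : x ∈ interior (A' ∪ B') ∩ U' := ⟨hint, hA' hxA⟩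
      have hWA : interior (A' ∪ B') ∩ U' ⊆ A' := by
        intro y ⟨hy1, hy2⟩
        rcases interior_subset hy1 with h | h
        · exact h
        · exact absurd (hB' h) (fun hyV => hUV'.ne_of_mem hy2 hyV rfl)
      exact mem_interior_iff_mem_nhds.2 (Filter.mem_of_superset (hW.mem_nhds hxW) hWA)
  apply union_subset
  · exact key A B U V hAc hA hB hU hV hUV
  · rw [union_comm]
    exact key B A V U hBc hB hA hV hU hUV.symm

lemma integral_id_closedBall (c : EuclideanSpace ℝ (Fin 2)) (r : ℝ) :
    ∫ x in closedBall c r, x = (volume (closedBall c r)).toReal • c := by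
  rcases le_or_gt r 0 with hr | hr
  · rcases lt_or_eq_of_le hr with hr' | rfl
    · simp [closedBall_eq_empty.2 hr']
    · simp [closedBall_zero]
  have hms0 : MeasurableSet (closedBall (0:EuclideanSpace ℝ (Fin 2)) r) := measurableSet_closedBall
  have hmsc : MeasurableSet (closedBall c r) := measurableSet_closedBall
  have h0 : ∫ x in closedBall (0:EuclideanSpace ℝ (Fin 2)) r, x = 0 := by
    set F : EuclideanSpace ℝ (Fin 2) → EuclideanSpace ℝ (Fin 2) :=
      (closedBall (0:EuclideanSpace ℝ (Fin 2)) r).indicator id with hF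
    have heq : ∫ x, F x = ∫ x, F (-x) := (integral_neg_eq_self F volume).symm
    have hFneg : ∀ x, F (-x) = - F x := by
      intro x
      by_cases h : x ∈ closedBall (0:EuclideanSpace ℝ (Fin 2)) r
      · have h' : -x ∈ closedBall (0:EuclideanSpace ℝ (Fin 2)) r := by
          simpa [mem_closedBall, dist_zero_right] using
            (by simpa [mem_closedBall, dist_zero_right] using h : ‖x‖ ≤ r)
        simp [hF, indicator_of_mem h, indicator_of_mem h']
      · have h' : -x ∉ closedBall (0:EuclideanSpace ℝ (Fin 2)) r := by
          simp only [mem_closedBall, dist_zero_right, norm_neg] at *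
          exact h
        simp [hF, indicator_of_notMem h, indicator_of_notMem h']
    have hneg : ∫ x, F x = - ∫ x, F x := by
      nth_rewrite 1 [heq]
      calc ∫ x, F (-x) = ∫ x, - F x := by simp_rw [hFneg]
        _ = - ∫ x, F x := integral_neg F
    have h2 : (2:ℝ) • ∫ x, F x = 0 := by
      rw [two_smul]
      nth_rewrite 2 [hneg]
      simp
    have hzero : ∫ x, F x = 0 := by
      rcases smul_eq_zero.1 h2 with h | h
      · norm_num at h
      · exact h
    rw [← integral_indicator hms0]
    exact hzero
  have hshift : ∀ x : EuclideanSpace ℝ (Fin 2),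
      x + c ∈ closedBall c r ↔ x ∈ closedBall (0:EuclideanSpace ℝ (Fin 2)) r := by
    intro x
    simp [mem_closedBall, dist_eq_norm]
  have h1 : ∫ x in closedBall c r, x = ∫ x in closedBall (0:EuclideanSpace ℝ (Fin 2)) r, (x + c) := by
    set g : EuclideanSpace ℝ (Fin 2) → EuclideanSpace ℝ (Fin 2) :=
      (closedBall c r).indicator id with hg
    have hint : ∫ x, g (x + c) = ∫ x, g x := integral_add_right_eq_self g c
    have hgl : ∀ x, g (x + c)
        = (closedBall (0:EuclideanSpace ℝ (Fin 2)) r).indicator (fun y => y + c) x := by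
      intro x
      by_cases h : x ∈ closedBall (0:EuclideanSpace ℝ (Fin 2)) r
      · rw [indicator_of_mem h, hg, indicator_of_mem ((hshift x).2 h)]; rfl
      · rw [indicator_of_notMem h, hg, indicator_of_notMem (fun hc => h ((hshift x).1 hc))]
    calc ∫ x in closedBall c r, x = ∫ x, g x := (integral_indicator hmsc).symm
      _ = ∫ x, g (x + c) := hint.symm
      _ = ∫ x, (closedBall (0:EuclideanSpace ℝ (Fin 2)) r).indicator (fun y => y + c) x := by
          simp_rw [hgl]
      _ = ∫ x in closedBall (0:EuclideanSpace ℝ (Fin 2)) r, (x + c) := integral_indicator hms0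
  have hvol : volume (closedBall c r) = volume (closedBall (0:EuclideanSpace ℝ (Fin 2)) r) := by
    rw [EuclideanSpace.volume_closedBall, EuclideanSpace.volume_closedBall]
  have hintid : IntegrableOn (fun x : EuclideanSpace ℝ (Fin 2) => x)
      (closedBall (0:EuclideanSpace ℝ (Fin 2)) r) volume :=
    continuous_id.continuousOn.integrableOn_compact (isCompact_closedBall _ _)
  have hintc : IntegrableOn (fun _ : EuclideanSpace ℝ (Fin 2) => c)
      (closedBall (0:EuclideanSpace ℝ (Fin 2)) r) volume :=
    integrableOn_const (measure_closedBall_lt_top).ne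
  rw [h1, integral_add hintid hintc, h0, setIntegral_const, hvol, zero_add]
  rfl



noncomputable def dn (n : ℕ) : ℝ := 2 * ((n : ℝ) - 1) ^ 2 / (2 * (n : ℝ) - 1)

lemma dist_pt (a b : ℝ) : dist (pt a 0) (pt b 0) = |a - b| := by
  rw [EuclideanSpace.dist_eq]
  simp [pt, Fin.sum_univ_two, Real.dist_eq]
  exact Real.sqrt_sq_eq_abs _

lemma pt_zero : pt 0 0 = 0 := by
  ext i
  fin_cases i <;> rfl

section facts
variable {n : ℕ} (hn : 2 ≤ n)
include hn

lemma hN : (2:ℝ) ≤ (n:ℝ) := by exact_mod_cast hn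
lemma hN0 : (0:ℝ) < (n:ℝ) := lt_of_lt_of_le two_pos (hN hn)
lemma hR_pos : 0 < Rn n := by
  have := hN hn
  rw [Rn]
  have : 1/(n:ℝ) ≤ 1/2 := by
    apply div_le_div_of_nonneg_left (by norm_num) (by norm_num) this
  linarith
lemma hR_lt : Rn n < 1 := by
  have h0 := hN0 hn
  rw [Rn]
  have : 0 < 1/(n:ℝ) := by positivity
  linarith
lemma h2n1_pos : (0:ℝ) < 2*(n:ℝ) - 1 := by have := hN hn; linarith
lemma hr_pos : 0 < rn n := by
  rw [rn]
  exact div_pos (Real.sqrt_pos.2 (h2n1_pos hn)) (hN0 hn)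
lemma hr_sq : rn n ^ 2 = (2*(n:ℝ) - 1) / (n:ℝ)^2 := by
  rw [rn, div_pow, Real.sq_sqrt (h2n1_pos hn).le]
lemma hr_lt : rn n < 1 := by
  have hN' := hN hn
  have h2 : Real.sqrt (2*(n:ℝ) - 1) < (n:ℝ) := by
    nth_rewrite 2 [show (n:ℝ) = Real.sqrt ((n:ℝ)^2) by rw [Real.sqrt_sq (hN0 hn).le]]
    apply Real.sqrt_lt_sqrt (h2n1_pos hn).le
    nlinarith
  rw [rn, div_lt_one (hN0 hn)]
  exact h2
lemma hsq_sum : Rn n ^ 2 + rn n ^ 2 = 1 := by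
  have h0 := (hN0 hn).ne'
  rw [hr_sq hn, Rn]
  field_simp
  ring
lemma hd_nonneg : 0 ≤ dn n := by
  have := hN hn
  have h1 := h2n1_pos hn
  rw [dn]
  apply div_nonneg (by positivity) h1.le
lemma hdist_centers : dist (pt 2 0) (pt (-(dn n)) 0) = 2 + dn n := by
  rw [dist_pt, show (2:ℝ) - (-(dn n)) = 2 + dn n by ring,
    abs_of_nonneg (by linarith [hd_nonneg hn])]
lemma hdisj_balls :
    Disjoint (closedBall (pt 2 0) (Rn n)) (closedBall (pt (-(dn n)) 0) (rn n)) := by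
  apply closedBall_disjoint_closedBall
  rw [hdist_centers hn]
  have := hR_lt hn; have := hr_lt hn; have := hd_nonneg hn
  linarith

omit hn in
lemma Ωn_eq : Ωn n = closedBall (pt 2 0) (Rn n) ∪ closedBall (pt (-(dn n)) 0) (rn n) := rfl

lemma volume_Ωn : volume (Ωn n) = ENNReal.ofReal π := by
  rw [Ωn_eq, measure_union (hdisj_balls hn) measurableSet_closedBall,
    vol_ball_E2 _ _ (hR_pos hn).le, vol_ball_E2 _ _ (hr_pos hn).le,
    ← ENNReal.ofReal_add (by positivity) (by positivity)]
  congr 1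
  have := hsq_sum hn
  nlinarith [Real.pi_pos]

omit hn in
lemma integrable_id_ball (c : EuclideanSpace ℝ (Fin 2)) (r : ℝ) :
    IntegrableOn (fun x : EuclideanSpace ℝ (Fin 2) => x) (closedBall c r) volume :=
  continuous_id.continuousOn.integrableOn_compact (isCompact_closedBall _ _)

lemma barycenter_Ωn : (∫ x in Ωn n, x) = (0 : EuclideanSpace ℝ (Fin 2)) := by
  rw [Ωn_eq, setIntegral_union (hdisj_balls hn) measurableSet_closedBall
    (integrable_id_ball _ _) (integrable_id_ball _ _),
    integral_id_closedBall, integral_id_closedBall,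
    vol_ball_E2 _ _ (hR_pos hn).le, vol_ball_E2 _ _ (hr_pos hn).le,
    ENNReal.toReal_ofReal (by positivity), ENNReal.toReal_ofReal (by positivity)]
  have h2n1 := h2n1_pos hn
  have hn0 := hN0 hn
  ext i
  fin_cases i
  · show π * Rn n ^ 2 * (pt 2 0 0) + π * rn n ^2 * (pt (-(dn n)) 0 0) = 0
    show π * Rn n ^ 2 * 2 + π * rn n ^2 * (-(dn n)) = 0
    rw [hr_sq hn, Rn, dn]
    rw [one_sub_div hn0.ne', div_pow]
    have e : (2*(n:ℝ)-1) / (n:ℝ)^2 * (2*((n:ℝ)-1)^2/(2*(n:ℝ)-1)) = 2*((n:ℝ)-1)^2/(n:ℝ)^2 := by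
      rw [div_mul_div_comm, mul_comm (2*(n:ℝ)-1), mul_div_mul_right _ _ h2n1.ne']
    rw [mul_neg, mul_assoc π ((2*(n:ℝ)-1) / (n:ℝ)^2), e]
    ring
  · show π * Rn n ^ 2 * (pt 2 0 1) + π * rn n ^2 * (pt (-(dn n)) 0 1) = 0
    show π * Rn n ^ 2 * 0 + π * rn n ^2 * 0 = 0
    ring

lemma frontier_Ωn :
    frontier (Ωn n) = sphere (pt 2 0) (Rn n) ∪ sphere (pt (-(dn n)) 0) (rn n) := by
  set c₁ : EuclideanSpace ℝ (Fin 2) := pt 2 0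
  set c₂ : EuclideanSpace ℝ (Fin 2) := pt (-(dn n)) 0
  set U : Set (EuclideanSpace ℝ (Fin 2)) := {x | dist x c₁ < dist x c₂} with hUdef
  set V : Set (EuclideanSpace ℝ (Fin 2)) := {x | dist x c₂ < dist x c₁} with hVdef
  have hcc : dist c₁ c₂ = 2 + dn n := hdist_centers hn
  have hRlt := hR_lt hn; have hrlt := hr_lt hn; have hd0 := hd_nonneg hn
  have hU : IsOpen U := isOpen_lt (continuous_id.dist continuous_const)
    (continuous_id.dist continuous_const)
  have hV : IsOpen V := isOpen_lt (continuous_id.dist continuous_const)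
    (continuous_id.dist continuous_const)
  have hAU : closedBall c₁ (Rn n) ⊆ U := by
    intro x hx
    rw [mem_closedBall] at hx
    have htri : dist c₁ c₂ ≤ dist c₁ x + dist x c₂ := dist_triangle _ _ _
    rw [dist_comm c₁ x] at htri
    show dist x c₁ < dist x c₂
    rw [hcc] at htri
    linarith
  have hBV : closedBall c₂ (rn n) ⊆ V := by
    intro x hx
    rw [mem_closedBall] at hx
    have htri : dist c₁ c₂ ≤ dist c₁ x + dist x c₂ := dist_triangle _ _ _
    rw [dist_comm c₁ x] at htri
    show dist x c₂ < dist x c₁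
    rw [hcc] at htri
    linarith
  have hUV : Disjoint U V := by
    rw [Set.disjoint_left]
    intro x hxU hxV
    simp only [hUdef, hVdef, Set.mem_setOf_eq] at hxU hxV
    linarith
  rw [Ωn_eq, frontier_union_sep isClosed_closedBall isClosed_closedBall hAU hBV hU hV hUV,
    frontier_closedBall' , frontier_closedBall']

lemma hausdorff_frontier_Ωn :
    μH[1] (frontier (Ωn n)) = ENNReal.ofReal (2 * π * (Rn n + rn n)) := by
  rw [frontier_Ωn hn]
  have hdisjsph : Disjoint (sphere (pt 2 0) (Rn n)) (sphere (pt (-(dn n)) 0) (rn n)) :=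
    (hdisj_balls hn).mono sphere_subset_closedBall sphere_subset_closedBall
  rw [measure_union hdisjsph (isClosed_sphere.measurableSet),
    hausdorff_sphere_E2 _ (hR_pos hn), hausdorff_sphere_E2 _ (hr_pos hn),
    ← ENNReal.ofReal_add (mul_nonneg (by positivity) (hR_pos hn).le)
      (mul_nonneg (by positivity) (hr_pos hn).le)]
  congr 1
  ring

lemma deficit_Ωn :
    ((μH[1] (frontier (Ωn n))).toReal - 2 * π) / (2 * π) = Rn n + rn n - 1 := by
  rw [hausdorff_frontier_Ωn hn, ENNReal.toReal_ofReal
    (by nlinarith [Real.pi_pos, hR_pos hn, hr_pos hn])]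
  have hpi : (2:ℝ) * π ≠ 0 := by positivity
  field_simp

end facts

lemma tendsto_rn : Filter.Tendsto (fun n : ℕ => rn n) Filter.atTop (nhds 0) := by
  have h1 : Filter.Tendsto (fun n : ℕ => 1/(n:ℝ)) Filter.atTop (nhds 0) :=
    tendsto_one_div_atTop_nhds_zero_nat
  have hquot : Filter.Tendsto (fun n : ℕ => (2*(n:ℝ)-1)/(n:ℝ)^2) Filter.atTop (nhds 0) := by
    have h2 : Filter.Tendsto (fun n : ℕ => 2*(1/(n:ℝ)) - (1/(n:ℝ))*(1/(n:ℝ)))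
        Filter.atTop (nhds (2*0 - 0*0)) := ((h1.const_mul 2).sub (h1.mul h1))
    norm_num at h2
    refine h2.congr' ?_
    filter_upwards [Filter.eventually_ge_atTop 1] with n hn
    have hn0 : (0:ℝ) < n := by exact_mod_cast hn
    field_simp
  have hs : Filter.Tendsto (fun n : ℕ => Real.sqrt ((2*(n:ℝ)-1)/(n:ℝ)^2))
      Filter.atTop (nhds (Real.sqrt 0)) :=
    (Real.continuous_sqrt.continuousAt).tendsto.comp hquot
  rw [Real.sqrt_zero] at hs
  refine hs.congr' ?_
  filter_upwards [Filter.eventually_ge_atTop 1] with n hn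
  have hn0 : (0:ℝ) < n := by exact_mod_cast hn
  have hn1 : (1:ℝ) ≤ (n:ℝ) := by exact_mod_cast hn
  rw [rn, Real.sqrt_div (by linarith : (0:ℝ) ≤ 2*(n:ℝ)-1), Real.sqrt_sq hn0.le]

lemma tendsto_deficit : Filter.Tendsto (fun n : ℕ => Rn n + rn n - 1) Filter.atTop (nhds 0) := by
  have h1 : Filter.Tendsto (fun n : ℕ => 1/(n:ℝ)) Filter.atTop (nhds 0) :=
    tendsto_one_div_atTop_nhds_zero_nat
  have h := tendsto_rn.sub h1
  norm_num at h
  refine h.congr (fun n => ?_)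
  rw [Rn]
  ring

lemma dn_ge_two {n : ℕ} (hn : 4 ≤ n) : 2 ≤ dn n := by
  have hN4 : (4:ℝ) ≤ (n:ℝ) := by exact_mod_cast hn
  have h2n1 : (0:ℝ) < 2*(n:ℝ) - 1 := by linarith
  rw [dn, le_div_iff₀ h2n1]
  nlinarith

lemma symmdiff_eq {n : ℕ} (hn : 4 ≤ n) :
    (volume ((Ωn n \ closedBall (0 : EuclideanSpace ℝ (Fin 2)) 1) ∪
        (closedBall (0 : EuclideanSpace ℝ (Fin 2)) 1 \ Ωn n))).toReal / Real.pi = 2 := by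
  have hn2 : 2 ≤ n := le_trans (by norm_num) hn
  have hRlt := hR_lt hn2
  have hrlt := hr_lt hn2
  have hd2 := dn_ge_two hn
  have hdist1 : dist (pt 2 0) (0 : EuclideanSpace ℝ (Fin 2)) = 2 := by
    rw [← pt_zero, dist_pt]; norm_num
  have hdist2 : dist (pt (-(dn n)) 0) (0 : EuclideanSpace ℝ (Fin 2)) = dn n := by
    rw [← pt_zero, dist_pt]
    rw [show -(dn n) - 0 = -(dn n) by ring, abs_neg, abs_of_nonneg (by linarith)]
  have hdisj : Disjoint (Ωn n) (closedBall (0 : EuclideanSpace ℝ (Fin 2)) 1) := by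
    rw [Ωn_eq]
    apply Disjoint.union_left
    · apply closedBall_disjoint_closedBall
      rw [hdist1]; linarith
    · apply closedBall_disjoint_closedBall
      rw [hdist2]; linarith
  rw [hdisj.sdiff_eq_left, hdisj.symm.sdiff_eq_left,
    measure_union hdisj.symm.symm measurableSet_closedBall, volume_Ωn hn2,
    vol_ball_E2 _ 1 zero_le_one,
    ← ENNReal.ofReal_add Real.pi_pos.le (by positivity),
    ENNReal.toReal_ofReal (by positivity)]
  have hpi := Real.pi_pos
  field_simp
  ring

end Fgl


/-- The disconnected sets `Ωₙ` have area `π`, barycenter at the origin, De Giorgi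
isoperimetric deficit `Rₙ + rₙ - 1 → 0`, and barycentric asymmetry `λ₀(Ωₙ) = 2`
for all large `n`; hence `δ(Ωₙ)/λ₀(Ωₙ)² → 0`. -/
theorem stmt_11 :
    (∀ n : ℕ, 2 ≤ n → volume (Ωn n) = ENNReal.ofReal Real.pi) ∧
    (∀ n : ℕ, 2 ≤ n → (∫ x in Ωn n, x) = (0 : EuclideanSpace ℝ (Fin 2))) ∧
    (∀ n : ℕ, 2 ≤ n →
      ((μH[1] (frontier (Ωn n))).toReal - 2 * Real.pi) / (2 * Real.pi)
        = Rn n + rn n - 1) ∧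
    Filter.Tendsto (fun n : ℕ => Rn n + rn n - 1) Filter.atTop (nhds 0) ∧
    (∀ᶠ n : ℕ in Filter.atTop,
      (volume ((Ωn n \ closedBall (0 : EuclideanSpace ℝ (Fin 2)) 1) ∪
          (closedBall (0 : EuclideanSpace ℝ (Fin 2)) 1 \ Ωn n))).toReal / Real.pi = 2) ∧
    Filter.Tendsto
      (fun n : ℕ =>
        (((μH[1] (frontier (Ωn n))).toReal - 2 * Real.pi) / (2 * Real.pi)) /
          ((volume ((Ωn n \ closedBall (0 : EuclideanSpace ℝ (Fin 2)) 1) ∪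
              (closedBall (0 : EuclideanSpace ℝ (Fin 2)) 1 \ Ωn n))).toReal / Real.pi) ^ 2)
      Filter.atTop (nhds 0) := by
  refine ⟨fun n hn => Fgl.volume_Ωn hn, fun n hn => Fgl.barycenter_Ωn hn,
    fun n hn => Fgl.deficit_Ωn hn, Fgl.tendsto_deficit,
    Filter.eventually_atTop.2 ⟨4, fun n hn => Fgl.symmdiff_eq hn⟩, ?_⟩
  have h := Fgl.tendsto_deficit.div_const 4
  norm_num at h
  refine h.congr' ?_
  filter_upwards [Filter.eventually_ge_atTop 4] with n hn
  rw [Fgl.deficit_Ωn (le_trans (by norm_num) hn), Fgl.symmdiff_eq hn]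
  norm_num
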